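/- The category of polynomial functors has all small limits: for every small category J and every functor D from J to the category of functors Type → Type such that for each object j of J the functor D j is naturally isomorphic to the associated functor of some polynomial functor, the limit of D (computed pointwise in the functor category) is again naturally isomorphic to the associated functor of a polynomial functor; moreover, the position set of this limit polynomial is the limit over J of the position sets of the D j. -/

import Mathlib

open CategoryTheory

universe u

/-- The associated functor `Type u ⥤ Type u` of a polynomial functor. -/
def PFunctor.toFunctor (P : PFunctor.{u}) : Type u ⥤ Type u where
  obj X := P.Obj X
  map f := TypeCat.ofHom fun x => P.map f x
  map_id := by intro X; apply ConcreteCategory.hom_ext; intro x; exact P.id_map x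
  map_comp := by intro X Y Z f g; apply ConcreteCategory.hom_ext; intro x; exact (P.map_map f g x).symm

namespace Stmt14Aux

open CategoryTheory.Limits

lemma sigma_ext {A X : Type u} {B : A → Type u} {a a' : A} {g : B a → X} {g' : B a' → X}
    (p : a = a') (hg : ∀ b', g (cast (congrArg B p.symm) b') = g' b') :
    (⟨a, g⟩ : Σ c, B c → X) = ⟨a', g'⟩ := by
  subst p
  exact congrArg _ (funext fun b => hg b)

lemma sigma_inv {A X : Type u} {B : A → Type u} {a a' : A} {g : B a → X} {g' : B a' → X}
    (h : (⟨a, g⟩ : Σ c, B c → X) = ⟨a', g'⟩) :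
    ∃ p : a = a', ∀ b', g (cast (congrArg B p.symm) b') = g' b' := by
  have p : a = a' := congrArg Sigma.fst h
  subst p
  injection h with h1 h2
  exact ⟨rfl, fun b => congrFun h2 b⟩

section PosDir

variable {P₁ P₂ : PFunctor.{u}}

/-- The action on positions of a natural transformation between polynomial functors. -/
def pos (τ : P₁.toFunctor ⟶ P₂.toFunctor) (a : P₁.A) : P₂.A :=
  (τ.app (P₁.B a) ⟨a, id⟩).1

/-- The action on directions of a natural transformation between polynomial functors. -/
def dir (τ : P₁.toFunctor ⟶ P₂.toFunctor) (a : P₁.A) : P₂.B (pos τ a) → P₁.B a :=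
  (τ.app (P₁.B a) ⟨a, id⟩).2

lemma key (τ : P₁.toFunctor ⟶ P₂.toFunctor) (X : Type u) (a : P₁.A) (g : P₁.B a → X) :
    τ.app X ⟨a, g⟩ = ⟨pos τ a, g ∘ dir τ a⟩ :=
  NatTrans.naturality_apply τ (TypeCat.ofHom g) (⟨a, id⟩ : P₁.Obj (P₁.B a))

lemma key' (τ : P₁.toFunctor ⟶ P₂.toFunctor) (X : Type u) (x : P₁.Obj X) :
    τ.app X x = ⟨pos τ x.1, x.2 ∘ dir τ x.1⟩ :=
  key τ X x.1 x.2

end PosDir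

variable {J : Type u} [SmallCategory J] (D : J ⥤ Type u ⥤ Type u)
  (P : J → PFunctor.{u}) (e : ∀ j, D.obj j ≅ (P j).toFunctor)

/-- The transition natural transformation between the polynomial models. -/
def tr {j j' : J} (f : j ⟶ j') : (P j).toFunctor ⟶ (P j').toFunctor :=
  (e j).inv ≫ D.map f ≫ (e j').hom

/-- Positions of the limit polynomial functor. -/
def QA : Type u :=
  { a : ∀ j, (P j).A // ∀ {j j' : J} (f : j ⟶ j'), pos (tr D P e f) (a j) = a j' }

/-- The relation generating the directions. -/
def Rel (a : QA D P e) : (Σ j : J, (P j).B (a.1 j)) → (Σ j : J, (P j).B (a.1 j)) → Prop :=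
  fun z z' => ∃ f : z.1 ⟶ z'.1,
    z.2 = dir (tr D P e f) (a.1 z.1) (cast (congrArg ((P z'.1).B) (a.2 f).symm) z'.2)

/-- The limit polynomial functor. -/
def Q : PFunctor.{u} := ⟨QA D P e, fun a => Quot (Rel D P e a)⟩

/-- Inclusion of directions at stage `j`. -/
def inc (a : QA D P e) (j : J) (b : (P j).B (a.1 j)) : (Q D P e).B a :=
  Quot.mk _ ⟨j, b⟩

/-- Evaluation at `X`. -/
abbrev ev (X : Type u) : (Type u ⥤ Type u) ⥤ Type u := (evaluation (Type u) (Type u)).obj X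

variable (X : Type u)

/-- The family of polynomial elements determined by a section. -/
def tfam (s : (D ⋙ ev X).sections) (j : J) : (P j).Obj X := (e j).hom.app X (s.1 j)

lemma tfam_compat (s : (D ⋙ ev X).sections) {j j' : J} (f : j ⟶ j') :
    (tr D P e f).app X (tfam D P e X s j) = tfam D P e X s j' := by
  show (e j').hom.app X ((D.map f).app X ((e j).inv.app X ((e j).hom.app X (s.1 j))))
      = (e j').hom.app X (s.1 j')
  rw [FunctorToTypes.hom_inv_id_app_apply]
  exact congrArg _ (s.2 f)

lemma pos_compat (s : (D ⋙ ev X).sections) {j j' : J} (f : j ⟶ j') :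
    pos (tr D P e f) ((tfam D P e X s j).1) = (tfam D P e X s j').1 :=
  congrArg Sigma.fst
    ((key' (tr D P e f) X (tfam D P e X s j)).symm.trans (tfam_compat D P e X s f))

/-- The position part of the forward map. -/
def fwdA (s : (D ⋙ ev X).sections) : QA D P e :=
  ⟨fun j => (tfam D P e X s j).1, fun f => pos_compat D P e X s f⟩

/-- Forward map: from sections to the polynomial functor. -/
def fwd (s : (D ⋙ ev X).sections) : (Q D P e).Obj X :=
  ⟨fwdA D P e X s, Quot.lift (fun z => (tfam D P e X s z.1).2 z.2) (by
    intro z z' hr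
    obtain ⟨f, hb⟩ := hr
    show (tfam D P e X s z.1).2 z.2 = (tfam D P e X s z'.1).2 z'.2
    obtain ⟨p, hp⟩ := sigma_inv
      ((key' (tr D P e f) X (tfam D P e X s z.1)).symm.trans (tfam_compat D P e X s f))
    rw [hb]
    exact hp z'.2)⟩

/-- Backward map: from the polynomial functor to sections. -/
def bwd (y : (Q D P e).Obj X) : (D ⋙ ev X).sections :=
  ⟨fun j => (e j).inv.app X ⟨y.1.1 j, y.2 ∘ inc D P e y.1 j⟩, by
    intro j j' f
    show (D.map f).app X ((e j).inv.app X _) = _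
    have h1 : (D.map f).app X ((e j).inv.app X ⟨y.1.1 j, y.2 ∘ inc D P e y.1 j⟩)
        = (e j').inv.app X ((tr D P e f).app X ⟨y.1.1 j, y.2 ∘ inc D P e y.1 j⟩) :=
      (ConcreteCategory.congr_hom ((e j').hom_inv_id_app X) _).symm
    rw [h1, key]
    refine congrArg ((e j').inv.app X) (sigma_ext (y.1.2 f) fun b' => ?_)
    exact congrArg y.2 (Quot.sound ⟨f, rfl⟩)⟩

lemma bwd_fwd (s : (D ⋙ ev X).sections) : bwd D P e X (fwd D P e X s) = s := by
  refine Subtype.ext (funext fun j => ?_)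
  show (e j).inv.app X ⟨(tfam D P e X s j).1, _⟩ = s.1 j
  have h2 : ((fwd D P e X s).2 ∘ inc D P e (fwd D P e X s).1 j) = (tfam D P e X s j).2 :=
    funext fun b => rfl
  refine (congrArg (ConcreteCategory.hom ((e j).inv.app X)) (show (⟨(tfam D P e X s j).1, (fwd D P e X s).2 ∘ inc D P e (fwd D P e X s).1 j⟩ :
      (P j).Obj X) = tfam D P e X s j from Sigma.ext rfl (heq_of_eq h2))).trans ?_
  exact ConcreteCategory.congr_hom ((e j).hom_inv_id_app X) (s.1 j)

lemma bwd_inj : Function.Injective (bwd D P e X) := by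
  rintro ⟨a, h1⟩ ⟨a2, h2⟩ hyp
  have hval : ∀ j, (e j).inv.app X ⟨a.1 j, h1 ∘ inc D P e a j⟩
      = (e j).inv.app X ⟨a2.1 j, h2 ∘ inc D P e a2 j⟩ :=
    fun j => congrFun (congrArg Subtype.val hyp) j
  have hj : ∀ j, (⟨a.1 j, h1 ∘ inc D P e a j⟩ : (P j).Obj X)
      = ⟨a2.1 j, h2 ∘ inc D P e a2 j⟩ := by
    intro j
    have h3 := congrArg ((e j).hom.app X) (hval j)
    exact (ConcreteCategory.congr_hom ((e j).inv_hom_id_app X) _).symm.trans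
      (h3.trans (ConcreteCategory.congr_hom ((e j).inv_hom_id_app X) _))
  have pa : a = a2 := Subtype.ext (funext fun j => congrArg Sigma.fst (hj j))
  subst pa
  refine congrArg (Sigma.mk a) ?_
  funext q
  induction q using Quot.ind with
  | _ z =>
    obtain ⟨j, b⟩ := z
    obtain ⟨p, hp⟩ := sigma_inv (hj j)
    exact hp b

/-- The equivalence between sections and the polynomial functor, at `X`. -/
noncomputable def qEquiv : (D ⋙ ev X).sections ≃ (Q D P e).Obj X where
  toFun := fwd D P e X
  invFun := bwd D P e X
  left_inv := bwd_fwd D P e X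
  right_inv y := bwd_inj D P e X (bwd_fwd D P e X (bwd D P e X y))

/-- The composite equivalence from the polynomial functor at `X` to the limit at `X`. -/
noncomputable def cEquiv : (Q D P e).Obj X ≃ (limit D).obj X :=
  ((qEquiv D P e X).symm.trans ((Types.limitEquivSections (D ⋙ ev X)).symm.trans
    (limitObjIsoLimitCompEvaluation D X).toEquiv.symm))

lemma limit_obj_ext {Y : Type u} {a b : (limit D).obj Y}
    (hw : ∀ j, (limit.π D j).app Y a = (limit.π D j).app Y b) : a = b := by
  apply (limitObjIsoLimitCompEvaluation D Y).toEquiv.injective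
  refine Types.limit_ext _ _ _ fun j => ?_
  have ha := ConcreteCategory.congr_hom (limitObjIsoLimitCompEvaluation_hom_π D j Y) a
  have hb := ConcreteCategory.congr_hom (limitObjIsoLimitCompEvaluation_hom_π D j Y) b
  exact ha.trans ((hw j).trans hb.symm)

lemma pi_cEquiv (q : (Q D P e).Obj X) (j : J) :
    (limit.π D j).app X (cEquiv D P e X q)
      = (e j).inv.app X ⟨q.1.1 j, q.2 ∘ inc D P e q.1 j⟩ := by
  have h0 := ConcreteCategory.congr_hom (limitObjIsoLimitCompEvaluation_inv_π_app D j X)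
    ((Types.limitEquivSections (D ⋙ ev X)).symm (bwd D P e X q))
  refine Eq.trans h0 ?_
  rw [Types.limitEquivSections_symm_apply]
  rfl

/-- The natural isomorphism. -/
noncomputable def limIso : limit D ≅ (Q D P e).toFunctor :=
  (NatIso.ofComponents (fun X => (cEquiv D P e X).toIso) (by
    intro X Y g
    apply ConcreteCategory.hom_ext; intro q
    apply limit_obj_ext D
    intro j
    have lhs : (limit.π D j).app Y (cEquiv D P e Y ((Q D P e).toFunctor.map g q))
        = (e j).inv.app Y ⟨q.1.1 j, (g ∘ q.2) ∘ inc D P e q.1 j⟩ :=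
      pi_cEquiv D P e Y ((Q D P e).toFunctor.map g q) j
    have rhs : (limit.π D j).app Y ((limit D).map g (cEquiv D P e X q))
        = (e j).inv.app Y ⟨q.1.1 j, (g ∘ q.2) ∘ inc D P e q.1 j⟩ := by
      have h1 := NatTrans.naturality_apply (limit.π D j) g (cEquiv D P e X q)
      have h2 := NatTrans.naturality_apply (e j).inv g
        (⟨q.1.1 j, q.2 ∘ inc D P e q.1 j⟩ : (P j).Obj X)
      calc (limit.π D j).app Y ((limit D).map g (cEquiv D P e X q))
          = (D.obj j).map g ((limit.π D j).app X (cEquiv D P e X q)) := h1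
        _ = (D.obj j).map g ((e j).inv.app X ⟨q.1.1 j, q.2 ∘ inc D P e q.1 j⟩) :=
            congrArg _ (pi_cEquiv D P e X q j)
        _ = (e j).inv.app Y ⟨q.1.1 j, (g ∘ q.2) ∘ inc D P e q.1 j⟩ := h2.symm
    exact lhs.trans rhs.symm)).symm

/-- The equivalence between the positions and the sections at `PUnit`. -/
def aSecEquiv : (Q D P e).A ≃ (D ⋙ ev (PUnit : Type u)).sections where
  toFun a := ⟨fun j => (e j).inv.app PUnit ⟨a.1 j, fun _ => PUnit.unit⟩, by
    intro j j' f
    show (D.map f).app PUnit ((e j).inv.app PUnit _) = _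
    have h1 : (D.map f).app PUnit ((e j).inv.app PUnit ⟨a.1 j, fun _ => PUnit.unit⟩)
        = (e j').inv.app PUnit ((tr D P e f).app PUnit ⟨a.1 j, fun _ => PUnit.unit⟩) :=
      (ConcreteCategory.congr_hom ((e j').hom_inv_id_app PUnit) _).symm
    rw [h1, key]
    exact congrArg ((e j').inv.app PUnit) (sigma_ext (a.2 f) fun b' => rfl)⟩
  invFun s := fwdA D P e PUnit s
  left_inv a := by
    refine Subtype.ext (funext fun j => ?_)
    show ((e j).hom.app PUnit ((e j).inv.app PUnit ⟨a.1 j, fun _ => PUnit.unit⟩)).1 = a.1 j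
    exact congrArg Sigma.fst (ConcreteCategory.congr_hom ((e j).inv_hom_id_app PUnit) _)
  right_inv s := by
    refine Subtype.ext (funext fun j => ?_)
    show (e j).inv.app PUnit ⟨(tfam D P e PUnit s j).1, fun _ => PUnit.unit⟩ = s.1 j
    have h2 : ((fun _ => PUnit.unit : (P j).B (tfam D P e PUnit s j).1 → PUnit))
        = (tfam D P e PUnit s j).2 := funext fun b => Subsingleton.elim _ _
    refine (congrArg (ConcreteCategory.hom ((e j).inv.app PUnit)) (show (⟨(tfam D P e PUnit s j).1, fun _ => PUnit.unit⟩ : (P j).Obj PUnit)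
        = tfam D P e PUnit s j from by rw [h2]; exact Sigma.eta _)).trans ?_
    exact ConcreteCategory.congr_hom ((e j).hom_inv_id_app PUnit) (s.1 j)

end Stmt14Aux

open CategoryTheory.Limits in
/-- the category of polynomial functors has all small limits: a (pointwise) limit
of functors, each naturally isomorphic to a polynomial functor, is again naturally isomorphic
to a polynomial functor, whose position set is the limit of the position sets. -/
theorem stmt_14 (J : Type u) [SmallCategory J] (D : J ⥤ Type u ⥤ Type u)
    (h : ∀ j : J, ∃ P : PFunctor.{u}, Nonempty (D.obj j ≅ P.toFunctor)) :
    ∃ Q : PFunctor.{u},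
      Nonempty (limit D ≅ Q.toFunctor) ∧
      Nonempty (Q.A ≃ limit (D ⋙ (evaluation (Type u) (Type u)).obj PUnit)) := by
  choose P e using h
  exact ⟨Stmt14Aux.Q D P (fun j => (e j).some),
    ⟨Stmt14Aux.limIso D P (fun j => (e j).some)⟩,
    ⟨(Stmt14Aux.aSecEquiv D P (fun j => (e j).some)).trans
      (Types.limitEquivSections _).symm⟩⟩
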